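/- Let α ∈ ℝ and let f : ℂ \ [α,∞) → ℂ satisfy f(z) = -d + (z-α)·(e + ∫_{(α,∞)} (1+t-α)/(t-z) dρ(t)) for all z in the domain, where d, e ∈ ℝ and ρ is a finite signed measure on (α,∞). Then d = -lim_{x→0⁺} f(α - x) and e = -lim_{x→+∞} (f(α - x) + d)/x. -/

import Mathlib

open Matrix Complex MeasureTheory Filter
open scoped ComplexOrder

/-- The "imaginary part" of a complex square matrix: `Im M = (M - M*)/(2i)`. -/
noncomputable def mIm {q : ℕ} (M : Matrix (Fin q) (Fin q) ℂ) : Matrix (Fin q) (Fin q) ℂ :=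
  ((2 : ℂ) * Complex.I)⁻¹ • (M - Mᴴ)

/-- The "real part" of a complex square matrix: `Re M = (M + M*)/2`. -/
noncomputable def mRe {q : ℕ} (M : Matrix (Fin q) (Fin q) ℂ) : Matrix (Fin q) (Fin q) ℂ :=
  ((2 : ℂ))⁻¹ • (M + Mᴴ)

theorem stmt3 (α d e : ℝ)
    (τ : Measure ℝ) [IsFiniteMeasure τ] (hτ : τ (Set.Iic α) = 0)
    (ρd : ℝ → ℝ) (hρmeas : Measurable ρd) (hρint : Integrable ρd τ)
    (f : ℂ → ℂ)
    (hf : ∀ z : ℂ, (∀ t : ℝ, α ≤ t → z ≠ (t : ℂ)) →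
      f z = -(d : ℂ) + (z - (α : ℂ)) *
        ((e : ℂ) + ∫ t, ((1 + t - α : ℝ) : ℂ) / ((t : ℂ) - z) * (ρd t : ℂ) ∂τ)) :
    Tendsto (fun x : ℝ => f ((α : ℂ) - (x : ℂ))) (nhdsWithin 0 (Set.Ioi 0))
      (nhds (-(d : ℂ)))
    ∧ Tendsto (fun x : ℝ => (f ((α : ℂ) - (x : ℂ)) + (d : ℂ)) / (x : ℂ)) atTop
      (nhds (-(e : ℂ))) := by
  have hae : ∀ᵐ t ∂τ, α < t := by
    rw [ae_iff]
    convert hτ using 2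
    ext t
    simp [not_lt]
  -- the real-valued integral
  set J : ℝ → ℝ := fun x => ∫ t, (1 + t - α) / (t - α + x) * ρd t ∂τ with hJ
  -- the complex integral equals the cast of the real one
  have hIJ : ∀ x : ℝ,
      (∫ t, ((1 + t - α : ℝ) : ℂ) / ((t : ℂ) - ((α : ℂ) - (x : ℂ))) * (ρd t : ℂ) ∂τ)
        = ((J x : ℝ) : ℂ) := by
    intro x
    have h0 : ((J x : ℝ) : ℂ) = ∫ t, (((1 + t - α) / (t - α + x) * ρd t : ℝ) : ℂ) ∂τ :=
      integral_ofReal.symm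
    rw [h0]
    congr 1
    funext t
    push_cast
    ring
  -- value of f at α - x for x > 0
  have hval : ∀ x : ℝ, 0 < x →
      f ((α : ℂ) - (x : ℂ)) = -(d : ℂ) + (-(x : ℂ)) * ((e : ℂ) + ((J x : ℝ) : ℂ)) := by
    intro x hx
    have hne : ∀ t : ℝ, α ≤ t → ((α : ℂ) - (x : ℂ)) ≠ (t : ℂ) := by
      intro t ht h
      have : ((α - x : ℝ) : ℂ) = (t : ℂ) := by push_cast; linear_combination h
      have h2 : α - x = t := by exact_mod_cast this
      linarith
    rw [hf _ hne, hIJ]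
    ring_nf
  -- first limit: x * J x → 0 as x → 0⁺
  have hJ1 : Tendsto (fun x : ℝ => x * J x) (nhdsWithin 0 (Set.Ioi 0)) (nhds 0) := by
    have key : Tendsto (fun x : ℝ => ∫ t, x * ((1 + t - α) / (t - α + x) * ρd t) ∂τ)
        (nhdsWithin 0 (Set.Ioi 0)) (nhds (∫ t, (0 : ℝ) ∂τ)) := by
      apply tendsto_integral_filter_of_dominated_convergence (fun t => 2 * |ρd t|)
      · filter_upwards with x
        apply Measurable.aestronglyMeasurable
        fun_prop
      · have hmem : Set.Ioo (0:ℝ) 1 ∈ nhdsWithin 0 (Set.Ioi 0) :=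
          Ioo_mem_nhdsGT_of_mem (by norm_num)
        filter_upwards [hmem] with x hx
        filter_upwards [hae] with t ht
        have hx0 : 0 < x := hx.1
        have hx1 : x < 1 := hx.2
        have hden : 0 < t - α + x := by linarith
        rw [Real.norm_eq_abs, abs_mul, abs_mul, abs_div]
        rw [abs_of_pos hx0, abs_of_pos (by linarith : (0:ℝ) < 1 + t - α),
          abs_of_pos hden]
        have : x * ((1 + t - α) / (t - α + x)) ≤ 2 := by
          rw [mul_div_assoc'] at *
          rw [div_le_iff₀ hden]
          nlinarith
        calc x * ((1 + t - α) / (t - α + x) * |ρd t|)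
            = (x * ((1 + t - α) / (t - α + x))) * |ρd t| := by ring
          _ ≤ 2 * |ρd t| := by
              apply mul_le_mul_of_nonneg_right this (abs_nonneg _)
      · exact (hρint.abs).const_mul 2
      · filter_upwards [hae] with t ht
        have hne : t - α + 0 ≠ 0 := by simp; linarith
        have hcont : ContinuousAt (fun x : ℝ => x * ((1 + t - α) / (t - α + x) * ρd t)) 0 := by
          apply continuousAt_id.mul
          apply ContinuousAt.mul _ continuousAt_const
          exact (continuousAt_const.div (continuousAt_const.add continuousAt_id) hne)
        have := hcont.tendsto.mono_left (nhdsWithin_le_nhds (s := Set.Ioi (0:ℝ)))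
        simpa using this
    rw [integral_zero] at key
    apply key.congr
    intro x
    rw [MeasureTheory.integral_const_mul]
  -- second limit: J x → 0 as x → ∞
  have hJ2 : Tendsto J atTop (nhds 0) := by
    have key : Tendsto (fun x : ℝ => ∫ t, (1 + t - α) / (t - α + x) * ρd t ∂τ)
        atTop (nhds (∫ t, (0 : ℝ) ∂τ)) := by
      apply tendsto_integral_filter_of_dominated_convergence (fun t => |ρd t|)
      · filter_upwards with x
        apply Measurable.aestronglyMeasurable
        fun_prop
      · filter_upwards [eventually_ge_atTop (1:ℝ)] with x hx
        filter_upwards [hae] with t ht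
        have hden : 0 < t - α + x := by linarith
        rw [Real.norm_eq_abs, abs_mul, abs_div]
        rw [abs_of_pos (by linarith : (0:ℝ) < 1 + t - α), abs_of_pos hden]
        have : (1 + t - α) / (t - α + x) ≤ 1 := by
          rw [div_le_one hden]; linarith
        calc (1 + t - α) / (t - α + x) * |ρd t| ≤ 1 * |ρd t| :=
              mul_le_mul_of_nonneg_right this (abs_nonneg _)
          _ = |ρd t| := one_mul _
      · exact hρint.abs
      · filter_upwards [hae] with t ht
        have hd : Tendsto (fun x : ℝ => (1 + t - α) / (t - α + x)) atTop (nhds 0) := by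
          apply Tendsto.div_atTop tendsto_const_nhds
          exact tendsto_atTop_add_const_left _ _ tendsto_id
        simpa using hd.mul_const (ρd t)
    rw [integral_zero] at key
    exact key
  constructor
  · -- first limit
    have hx0 : Tendsto (fun x : ℝ => (x : ℂ)) (nhdsWithin 0 (Set.Ioi 0)) (nhds 0) := by
      have := (Complex.continuous_ofReal.tendsto 0).mono_left
        (nhdsWithin_le_nhds (s := Set.Ioi (0:ℝ)))
      simpa using this
    have hxJ : Tendsto (fun x : ℝ => (x : ℂ) * ((J x : ℝ) : ℂ)) (nhdsWithin 0 (Set.Ioi 0))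
        (nhds 0) := by
      have := (Complex.continuous_ofReal.tendsto 0).comp hJ1
      simpa [Function.comp_def] using this
    have hmain : Tendsto (fun x : ℝ => -(d : ℂ) + (-(((x:ℂ)) * (e:ℂ) + (x : ℂ) * ((J x : ℝ) : ℂ))))
        (nhdsWithin 0 (Set.Ioi 0)) (nhds (-(d:ℂ))) := by
      have h1 := ((hx0.mul_const (e:ℂ)).add hxJ).neg.const_add (-(d:ℂ))
      simpa using h1
    apply hmain.congr'
    filter_upwards [self_mem_nhdsWithin] with x hx
    rw [hval x hx]
    ring
  · -- second limit
    have hJc : Tendsto (fun x : ℝ => ((J x : ℝ) : ℂ)) atTop (nhds 0) := by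
      have := (Complex.continuous_ofReal.tendsto 0).comp hJ2
      simpa [Function.comp_def] using this
    have hmain : Tendsto (fun x : ℝ => -((e : ℂ) + ((J x : ℝ) : ℂ))) atTop
        (nhds (-(e : ℂ))) := by
      have h1 := (hJc.const_add (e:ℂ)).neg
      simpa using h1
    apply hmain.congr'
    filter_upwards [eventually_gt_atTop (0:ℝ)] with x hx
    rw [hval x hx]
    have hxne : (x : ℂ) ≠ 0 := by exact_mod_cast hx.ne'
    field_simp
    ring
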